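/- Let K be an n×d real matrix with rows K_1,…,K_n, let S ⊆ {1,…,n}, and let 0 < δ₂ ≤ δ₁ ≤ 1/4 be real numbers. Assume K_i ≠ 0 for all i ∈ S, that for all distinct j, ℓ ∈ S, |⟨K_j, K_ℓ⟩| ≤ δ₁ · min(‖K_j‖₂², ‖K_ℓ‖₂²), and for all j ∈ S and ℓ ∉ S, |⟨K_ℓ, K_j⟩| ≤ δ₂ · min(‖K_j‖₂², ‖K_ℓ‖₂²). Let ρ = 1/(1 + δ₁²|S| + δ₂² n) and let U = { i ∈ {1,…,n} : σ_i(K) ≥ ρ }. Then S ⊆ U and |U| ≤ d·(1 + δ₁²|S| + δ₂² n). -/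

import Mathlib

/-- The leverage score of row `j` of an `n × d` real matrix `K`:
`σ_j(K) = sup { ⟨K_j, v⟩² / ∑_ℓ ⟨K_ℓ, v⟩² : v ∈ ℝ^d, Kv ≠ 0 }`. -/
noncomputable def levScore {n d : ℕ} (K : Matrix (Fin n) (Fin d) ℝ) (j : Fin n) : ℝ :=
  sSup {x : ℝ | ∃ v : Fin d → ℝ, K.mulVec v ≠ 0 ∧
    x = (∑ i, K j i * v i) ^ 2 / ∑ ℓ, (∑ i, K ℓ i * v i) ^ 2}


open RealInnerProductSpace Finset

noncomputable section

namespace LevAux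

variable {n d : ℕ} (K : Matrix (Fin n) (Fin d) ℝ)

def Kmap : (Fin d → ℝ) →ₗ[ℝ] EuclideanSpace ℝ (Fin n) :=
  ((WithLp.linearEquiv 2 ℝ (Fin n → ℝ)).symm.toLinearMap).comp K.mulVecLin

def W : Submodule ℝ (EuclideanSpace ℝ (Fin n)) := LinearMap.range (Kmap K)

lemma Kmap_apply (v : Fin d → ℝ) (ℓ : Fin n) : Kmap K v ℓ = ∑ i, K ℓ i * v i := by
  simp [Kmap, Matrix.mulVec, dotProduct]

def proj (j : Fin n) : EuclideanSpace ℝ (Fin n) :=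
  (Submodule.orthogonalProjectionOnto (W K) (EuclideanSpace.single j 1) : EuclideanSpace ℝ (Fin n))

lemma elem_le (j : Fin n) {x : ℝ}
    (hx : ∃ v : Fin d → ℝ, K.mulVec v ≠ 0 ∧
      x = (∑ i, K j i * v i) ^ 2 / ∑ ℓ, (∑ i, K ℓ i * v i) ^ 2) :
    x ≤ ‖proj K j‖ ^ 2 := by
  obtain ⟨v, hv, rfl⟩ := hx
  set w : EuclideanSpace ℝ (Fin n) := Kmap K v with hw
  have hwW : w ∈ W K := ⟨v, rfl⟩
  have hwapp : ∀ ℓ, w ℓ = ∑ i, K ℓ i * v i := Kmap_apply K v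
  have hnorm : ‖w‖ ^ 2 = ∑ ℓ, (∑ i, K ℓ i * v i) ^ 2 := by
    rw [EuclideanSpace.norm_eq, Real.sq_sqrt (by positivity)]
    simp [hwapp]
  have hwne : w ≠ 0 := by
    intro h
    apply hv
    funext ℓ
    have := congrFun (congrArg (fun (z : EuclideanSpace ℝ (Fin n)) => (z : Fin n → ℝ)) h) ℓ
    simpa [hwapp ℓ, Matrix.mulVec, dotProduct] using this
  have hpos : (0:ℝ) < ∑ ℓ, (∑ i, K ℓ i * v i) ^ 2 := by
    rw [← hnorm]
    have : 0 < ‖w‖ := norm_pos_iff.mpr hwne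
    positivity
  have hinner : ⟪proj K j, w⟫ = ∑ i, K j i * v i := by
    have h1 : ⟪(⟨w, hwW⟩ : W K), Submodule.orthogonalProjectionOnto (W K) (EuclideanSpace.single j 1)⟫
        = ⟪w, (EuclideanSpace.single j 1 : EuclideanSpace ℝ (Fin n))⟫ :=
      Submodule.inner_orthogonalProjectionOnto_eq_of_mem_left (K := W K) ⟨w, hwW⟩ _
    rw [Submodule.coe_inner] at h1
    have h2 : ⟪w, proj K j⟫ = ⟪w, (EuclideanSpace.single j 1 : EuclideanSpace ℝ (Fin n))⟫ := h1
    rw [real_inner_comm, h2]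
    simp [EuclideanSpace.inner_single_right, hwapp]
  have hCS : (∑ i, K j i * v i) ^ 2 ≤ ‖proj K j‖ ^ 2 * ‖w‖ ^ 2 := by
    rw [← hinner]
    calc ⟪proj K j, w⟫ ^ 2 = ⟪proj K j, w⟫ * ⟪proj K j, w⟫ := sq _
      _ ≤ ⟪proj K j, proj K j⟫ * ⟪w, w⟫ := real_inner_mul_inner_self_le _ _
      _ = ‖proj K j‖ ^ 2 * ‖w‖ ^ 2 := by
          rw [real_inner_self_eq_norm_sq, real_inner_self_eq_norm_sq]
  rw [div_le_iff₀ hpos, ← hnorm]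
  exact hCS

lemma levScore_le (j : Fin n) : levScore K j ≤ ‖proj K j‖ ^ 2 :=
  Real.sSup_le (fun _ hx => elem_le K j hx) (by positivity)

lemma levScore_nonneg (j : Fin n) : 0 ≤ levScore K j := by
  apply Real.sSup_nonneg
  rintro x ⟨v, hv, rfl⟩
  positivity

lemma bddAbove_set (j : Fin n) : BddAbove {x : ℝ | ∃ v : Fin d → ℝ, K.mulVec v ≠ 0 ∧
    x = (∑ i, K j i * v i) ^ 2 / ∑ ℓ, (∑ i, K ℓ i * v i) ^ 2} :=
  ⟨_, fun _ hx => elem_le K j hx⟩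

lemma norm_proj_sq (x : EuclideanSpace ℝ (Fin n)) :
    ‖(Submodule.orthogonalProjectionOnto (W K) x : EuclideanSpace ℝ (Fin n))‖ ^ 2
      = ⟪x, (Submodule.orthogonalProjectionOnto (W K) x : EuclideanSpace ℝ (Fin n))⟫ := by
  have h := Submodule.inner_orthogonalProjectionOnto_eq_of_mem_left (K := W K)
    (Submodule.orthogonalProjectionOnto (W K) x) x
  rw [Submodule.coe_inner] at h
  rw [← real_inner_self_eq_norm_sq, h, real_inner_comm]

lemma sum_proj_le : ∑ j, ‖proj K j‖ ^ 2 ≤ (d : ℝ) := by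
  classical
  set b := stdOrthonormalBasis ℝ (W K) with hb
  set N := Module.finrank ℝ (W K) with hN
  have key : ∀ j, ‖proj K j‖ ^ 2
      = ∑ k : Fin N, ⟪((b k : EuclideanSpace ℝ (Fin n))), EuclideanSpace.single j 1⟫
          * ⟪(EuclideanSpace.single j 1 : EuclideanSpace ℝ (Fin n)), (b k : EuclideanSpace ℝ (Fin n))⟫ := by
    intro j
    rw [proj, norm_proj_sq]
    rw [b.orthogonalProjectionOnto_apply_eq_sum (U := W K)]
    rw [Submodule.coe_sum]
    rw [inner_sum]
    refine Finset.sum_congr rfl fun k _ => ?_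
    rw [Submodule.coe_smul, real_inner_smul_right]
  have hsum : ∑ j, ‖proj K j‖ ^ 2 = (N : ℝ) := by
    rw [Finset.sum_congr rfl (fun j _ => key j), Finset.sum_comm]
    have : ∀ k : Fin N, ∑ j,
        ⟪((b k : EuclideanSpace ℝ (Fin n))), EuclideanSpace.single j 1⟫
          * ⟪(EuclideanSpace.single j 1 : EuclideanSpace ℝ (Fin n)), (b k : EuclideanSpace ℝ (Fin n))⟫ = 1 := by
      intro k
      have := (EuclideanSpace.basisFun (Fin n) ℝ).sum_inner_mul_inner
        ((b k : EuclideanSpace ℝ (Fin n))) ((b k : EuclideanSpace ℝ (Fin n)))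
      simp only [EuclideanSpace.basisFun_apply] at this
      rw [this, real_inner_self_eq_norm_sq]
      have h1 : ‖(b k : EuclideanSpace ℝ (Fin n))‖ = 1 := b.orthonormal.1 k
      rw [h1]; norm_num
    rw [Finset.sum_congr rfl (fun k _ => this k)]
    simp
  rw [hsum]
  have : N ≤ d := by
    have h1 := LinearMap.finrank_range_le (Kmap K)
    rw [Module.finrank_fin_fun] at h1
    exact h1
  exact_mod_cast this

end LevAux
end

/-- In the planted model, with `ρ = 1/(1 + δ₁²|S| + δ₂²n)` and
`U = { i : σ_i(K) ≥ ρ }`, we have `S ⊆ U` and `|U| ≤ d(1 + δ₁²|S| + δ₂²n)`. -/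
theorem planted_model_universal_set {n d : ℕ} (K : Matrix (Fin n) (Fin d) ℝ)
    (S : Finset (Fin n)) (δ₁ δ₂ : ℝ) (hδ₂ : 0 < δ₂) (hδ₂₁ : δ₂ ≤ δ₁) (hδ₁ : δ₁ ≤ 1 / 4)
    (hK0 : ∀ i ∈ S, (K i : Fin d → ℝ) ≠ 0)
    (hSS : ∀ j ∈ S, ∀ ℓ ∈ S, j ≠ ℓ →
      |∑ i, K j i * K ℓ i| ≤ δ₁ * min (∑ i, K j i ^ 2) (∑ i, K ℓ i ^ 2))
    (hSc : ∀ j ∈ S, ∀ ℓ, ℓ ∉ S →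
      |∑ i, K ℓ i * K j i| ≤ δ₂ * min (∑ i, K j i ^ 2) (∑ i, K ℓ i ^ 2)) :
    S ⊆ (Finset.univ.filter fun i : Fin n =>
        1 / (1 + δ₁ ^ 2 * S.card + δ₂ ^ 2 * n) ≤ levScore K i) ∧
    (((Finset.univ.filter fun i : Fin n =>
        1 / (1 + δ₁ ^ 2 * S.card + δ₂ ^ 2 * n) ≤ levScore K i).card : ℝ) ≤
      d * (1 + δ₁ ^ 2 * S.card + δ₂ ^ 2 * n)) := by
  classical
  have hδ₁0 : 0 < δ₁ := lt_of_lt_of_le hδ₂ hδ₂₁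
  set C : ℝ := 1 + δ₁ ^ 2 * S.card + δ₂ ^ 2 * n with hC
  have hC0 : 0 < C := by positivity
  constructor
  · -- S ⊆ U
    intro i hi
    simp only [Finset.mem_filter, Finset.mem_univ, true_and]
    set A : ℝ := ∑ i', K i i' ^ 2 with hA
    have hA0 : 0 < A := by
      have hne := hK0 i hi
      have : ∃ i', K i i' ≠ 0 := by
        by_contra h
        push_neg at h
        exact hne (funext h)
      obtain ⟨i₀, hi₀⟩ := this
      refine Finset.sum_pos' (fun _ _ => sq_nonneg _) ⟨i₀, Finset.mem_univ _, ?_⟩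
      positivity
    have hnum : (∑ i', K i i' * K i i') = A := by
      rw [hA]; exact Finset.sum_congr rfl fun _ _ => (sq _).symm
    have hKv : K.mulVec (K i) ≠ 0 := by
      intro h
      have h1 : (K.mulVec (K i)) i = 0 := congrFun h i
      rw [Matrix.mulVec, dotProduct] at h1
      rw [hnum] at h1
      exact hA0.ne' h1
    set t : Fin n → ℝ := fun ℓ => (∑ i', K ℓ i' * K i i') ^ 2 with ht
    set D : ℝ := ∑ ℓ, t ℓ with hD
    have htnonneg : ∀ ℓ, 0 ≤ t ℓ := fun ℓ => sq_nonneg _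
    have hti : t i = A ^ 2 := by rw [ht]; simp only; rw [hnum]
    have hD0 : 0 < D := by
      have h1 : t i ≤ D := Finset.single_le_sum (fun ℓ _ => htnonneg ℓ) (Finset.mem_univ i)
      nlinarith [sq_nonneg A]
    have hDle : D ≤ A ^ 2 * C := by
      have hsplit : ∑ ℓ ∈ S, t ℓ + ∑ ℓ ∈ Sᶜ, t ℓ = D := Finset.sum_add_sum_compl S t
      have hS1 : ∑ ℓ ∈ S, t ℓ = t i + ∑ ℓ ∈ S.erase i, t ℓ :=
        (Finset.add_sum_erase S t hi).symm
      have hbound1 : ∀ ℓ ∈ S.erase i, t ℓ ≤ δ₁ ^ 2 * A ^ 2 := by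
        intro ℓ hℓ
        obtain ⟨hℓi, hℓS⟩ := Finset.mem_erase.mp hℓ
        have h1 := hSS ℓ hℓS i hi hℓi
        have h2 : |∑ i', K ℓ i' * K i i'| ≤ δ₁ * A := by
          refine h1.trans ?_
          have := min_le_right (∑ i', K ℓ i' ^ 2) (∑ i', K i i' ^ 2)
          nlinarith
        calc t ℓ = |∑ i', K ℓ i' * K i i'| ^ 2 := (sq_abs _).symm
          _ ≤ (δ₁ * A) ^ 2 := by
              apply pow_le_pow_left₀ (abs_nonneg _) h2
          _ = δ₁ ^ 2 * A ^ 2 := by ring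
      have hbound2 : ∀ ℓ ∈ Sᶜ, t ℓ ≤ δ₂ ^ 2 * A ^ 2 := by
        intro ℓ hℓ
        have hℓS : ℓ ∉ S := Finset.mem_compl.mp hℓ
        have h1 := hSc i hi ℓ hℓS
        have h2 : |∑ i', K ℓ i' * K i i'| ≤ δ₂ * A := by
          refine h1.trans ?_
          have := min_le_left (∑ i', K i i' ^ 2) (∑ i', K ℓ i' ^ 2)
          nlinarith
        calc t ℓ = |∑ i', K ℓ i' * K i i'| ^ 2 := (sq_abs _).symm
          _ ≤ (δ₂ * A) ^ 2 := by
              apply pow_le_pow_left₀ (abs_nonneg _) h2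
          _ = δ₂ ^ 2 * A ^ 2 := by ring
      have hS2 : ∑ ℓ ∈ S.erase i, t ℓ ≤ (S.card : ℝ) * (δ₁ ^ 2 * A ^ 2) := by
        calc ∑ ℓ ∈ S.erase i, t ℓ ≤ ((S.erase i).card : ℝ) * (δ₁ ^ 2 * A ^ 2) := by
              simpa using Finset.sum_le_card_nsmul (S.erase i) t _ hbound1
          _ ≤ (S.card : ℝ) * (δ₁ ^ 2 * A ^ 2) := by
              have h3 : ((S.erase i).card : ℝ) ≤ (S.card : ℝ) := by
                exact_mod_cast Finset.card_le_card (Finset.erase_subset _ _)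
              nlinarith [sq_nonneg δ₁, sq_nonneg A, mul_nonneg (sq_nonneg δ₁) (sq_nonneg A)]
      have hS3 : ∑ ℓ ∈ Sᶜ, t ℓ ≤ (n : ℝ) * (δ₂ ^ 2 * A ^ 2) := by
        calc ∑ ℓ ∈ Sᶜ, t ℓ ≤ ((Sᶜ.card : ℕ) : ℝ) * (δ₂ ^ 2 * A ^ 2) := by
              simpa using Finset.sum_le_card_nsmul Sᶜ t _ hbound2
          _ ≤ (n : ℝ) * (δ₂ ^ 2 * A ^ 2) := by
              have h3 : ((Sᶜ.card : ℕ) : ℝ) ≤ (n : ℝ) := by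
                have := Finset.card_le_card (Finset.subset_univ Sᶜ)
                simpa using (Nat.cast_le.mpr this : ((Sᶜ.card : ℕ) : ℝ) ≤ _)
              nlinarith [mul_nonneg (sq_nonneg δ₂) (sq_nonneg A)]
      rw [← hsplit, hS1, hti, hC]
      nlinarith
    have hmem : A ^ 2 / D ∈ {x : ℝ | ∃ v : Fin d → ℝ, K.mulVec v ≠ 0 ∧
        x = (∑ i', K i i' * v i') ^ 2 / ∑ ℓ, (∑ i', K ℓ i' * v i') ^ 2} := by
      refine ⟨K i, hKv, ?_⟩
      rw [hnum]
    have hle : A ^ 2 / D ≤ levScore K i := le_csSup (LevAux.bddAbove_set K i) hmem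
    refine le_trans ?_ hle
    rw [div_le_div_iff₀ hC0 hD0]
    nlinarith
  · -- cardinality bound
    set U := Finset.univ.filter fun i : Fin n => 1 / C ≤ levScore K i with hU
    have h1 : (U.card : ℝ) * (1 / C) ≤ ∑ j ∈ U, levScore K j := by
      have := Finset.card_nsmul_le_sum U (levScore K) (1 / C)
        (fun j hj => (Finset.mem_filter.mp hj).2)
      simpa [nsmul_eq_mul] using this
    have h2 : ∑ j ∈ U, levScore K j ≤ ∑ j, levScore K j :=
      Finset.sum_le_sum_of_subset_of_nonneg (Finset.subset_univ U)
        (fun j _ _ => LevAux.levScore_nonneg K j)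
    have h3 : ∑ j, levScore K j ≤ ∑ j, ‖LevAux.proj K j‖ ^ 2 :=
      Finset.sum_le_sum fun j _ => LevAux.levScore_le K j
    have h4 := LevAux.sum_proj_le K
    have h5 : (U.card : ℝ) * (1 / C) ≤ (d : ℝ) := by linarith
    rw [mul_one_div] at h5
    exact (div_le_iff₀ hC0).mp h5
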